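/- Let n ≥ 1 and let λ = (λ₁, …, λₙ) and μ = (μ₁, …, μₙ) be weakly decreasing sequences of nonnegative integers with μᵢ ≤ λᵢ for all 1 ≤ i ≤ n and μᵢ ≤ λ_{i+1} for all 1 ≤ i ≤ n−1. For 1 ≤ i ≤ n set uᵢ = (μᵢ − i, i) and vᵢ = (λᵢ − i, i + 1) in ℤ². Then the number of n-tuples (P₁, …, Pₙ) of pairwise vertex-disjoint monotone lattice paths with Pᵢ going from uᵢ to vᵢ equals the number N(λ/μ) of minimal lattice paths contained in the skew Young diagram λ/μ from its southwestern corner to its northeastern corner; equivalently, both counts equal #{(b₁, …, bₙ) ∈ ℤⁿ : b₁ ≥ b₂ ≥ … ≥ bₙ and μᵢ ≤ bᵢ ≤ λᵢ for all i}. -/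

import Mathlib

/-- `p` is a monotone lattice path on `ℤ²` from `u` to `v`: a finite sequence of
lattice points starting at `u`, ending at `v`, each consecutive difference being a
unit east step `(1,0)` or a unit north step `(0,1)`. -/
def IsMonotoneLatticePath (u v : ℤ × ℤ) (p : List (ℤ × ℤ)) : Prop :=
  p.head? = some u ∧ p.getLast? = some v ∧
    List.Chain' (fun a b : ℤ × ℤ => b - a = (1, 0) ∨ b - a = (0, 1)) p

def horiz (a h : ℤ) : ℕ → List (ℤ × ℤ)
  | 0 => [(a, h)]
  | m + 1 => (a, h) :: horiz (a + 1) h (m)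

lemma horiz_ne_nil (a h : ℤ) (m : ℕ) : horiz a h m ≠ [] := by
  cases m <;> simp [horiz]

lemma horiz_head (a h : ℤ) (m : ℕ) : (horiz a h m).head? = some (a, h) := by
  cases m <;> simp [horiz]

lemma getLast?_cons_ne_nil {α : Type*} (x : α) {l : List α} (hl : l ≠ []) :
    (x :: l).getLast? = l.getLast? := by
  cases l with
  | nil => exact absurd rfl hl
  | cons y t => simp

lemma horiz_getLast (a h : ℤ) (m : ℕ) : (horiz a h m).getLast? = some (a + m, h) := by
  induction m generalizing a with
  | zero => simp [horiz]
  | succ m ih =>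
    rw [horiz, getLast?_cons_ne_nil _ (horiz_ne_nil _ _ _), ih]
    congr 1
    push_cast
    ring_nf

lemma horiz_chain (a h : ℤ) (m : ℕ) :
    List.Chain' (fun x y : ℤ × ℤ => y - x = (1, 0) ∨ y - x = (0, 1)) (horiz a h m) := by
  induction m generalizing a with
  | zero => exact List.isChain_singleton _
  | succ m ih =>
    rw [horiz]; unfold List.Chain'; rw [List.isChain_cons]
    refine ⟨?_, ih (a + 1)⟩
    intro y hy
    rw [horiz_head] at hy
    simp only [Option.mem_def, Option.some.injEq] at hy
    subst hy
    left
    simp [Prod.ext_iff]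

lemma mem_horiz {x : ℤ × ℤ} (a h : ℤ) (m : ℕ) :
    x ∈ horiz a h m ↔ x.2 = h ∧ a ≤ x.1 ∧ x.1 ≤ a + m := by
  induction m generalizing a with
  | zero =>
    simp [horiz, Prod.ext_iff]
    constructor
    · rintro ⟨h1, h2⟩; omega
    · rintro ⟨h1, h2, h3⟩; omega
  | succ m ih =>
    rw [horiz]
    simp only [List.mem_cons, ih, Prod.ext_iff]
    push_cast
    constructor
    · rintro (⟨h1, h2⟩ | ⟨h1, h2, h3⟩) <;> exact ⟨by omega, by omega, by omega⟩
    · rintro ⟨h1, h2, h3⟩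
      rcases eq_or_lt_of_le h2 with he | hl
      · left; omega
      · right; exact ⟨h1, by omega, by omega⟩

def cpath (a h : ℤ) (m k : ℕ) : List (ℤ × ℤ) :=
  horiz a h m ++ horiz (a + m) (h + 1) k

lemma cpath_isPath (a h : ℤ) (m k : ℕ) :
    IsMonotoneLatticePath (a, h) (a + m + k, h + 1) (cpath a h m k) := by
  refine ⟨?_, ?_, ?_⟩
  · rw [cpath, List.head?_append_of_ne_nil _ (horiz_ne_nil a h m)]
    exact horiz_head a h m
  · rw [cpath, List.getLast?_append_of_ne_nil _ (horiz_ne_nil _ _ _), horiz_getLast]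
  · refine List.IsChain.append (horiz_chain _ _ _) (horiz_chain _ _ _) ?_
    intro x hx y hy
    rw [horiz_getLast] at hx
    rw [horiz_head] at hy
    simp only [Option.mem_def, Option.some.injEq] at hx hy
    subst hx; subst hy
    right
    simp [Prod.ext_iff]

lemma mem_cpath {x : ℤ × ℤ} (a h : ℤ) (m k : ℕ) :
    x ∈ cpath a h m k ↔
      (x.2 = h ∧ a ≤ x.1 ∧ x.1 ≤ a + m) ∨
      (x.2 = h + 1 ∧ a + m ≤ x.1 ∧ x.1 ≤ a + m + k) := by
  rw [cpath, List.mem_append, mem_horiz, mem_horiz]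

lemma cpath_succ (a h : ℤ) (m k : ℕ) :
    cpath a h (m + 1) k = (a, h) :: cpath (a + 1) h m k := by
  rw [cpath, cpath, horiz]
  simp only [List.cons_append]
  congr 2
  push_cast
  ring_nf

lemma cpath_zero (a h : ℤ) (k : ℕ) :
    cpath a h 0 k = (a, h) :: horiz a (h + 1) k := by
  rw [cpath, horiz]
  simp

lemma path_y_le : ∀ (p : List (ℤ × ℤ)) (u v : ℤ × ℤ),
    IsMonotoneLatticePath u v p → u.2 ≤ v.2 := by
  intro p
  induction p with
  | nil => intro u v h; exact absurd h.1 (by simp)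
  | cons x rest ih =>
    intro u v h
    obtain ⟨h1, h2, h3⟩ := h
    simp only [List.head?_cons, Option.some.injEq] at h1
    subst h1
    cases rest with
    | nil =>
      simp only [List.getLast?_singleton, Option.some.injEq] at h2
      subst h2; exact le_rfl
    | cons y t =>
      unfold List.Chain' at h3; rw [List.isChain_cons_cons] at h3
      have hrest : IsMonotoneLatticePath y v (y :: t) :=
        ⟨rfl, by rw [← getLast?_cons_ne_nil x (List.cons_ne_nil y t)]; exact h2, h3.2⟩
      have := ih y v hrest
      rcases h3.1 with hs | hs <;>
        · have h2 := congrArg Prod.snd hs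
          simp at h2
          omega

lemma flat_structure : ∀ (p : List (ℤ × ℤ)) (a c h : ℤ),
    IsMonotoneLatticePath (a, h) (c, h) p →
    ∃ k : ℕ, c = a + k ∧ p = horiz a h k := by
  intro p
  induction p with
  | nil => intro a c h hp; exact absurd hp.1 (by simp)
  | cons x rest ih =>
    intro a c h hp
    obtain ⟨h1, h2, h3⟩ := hp
    simp only [List.head?_cons, Option.some.injEq] at h1
    subst h1
    cases rest with
    | nil =>
      simp only [List.getLast?_singleton, Option.some.injEq, Prod.ext_iff] at h2
      exact ⟨0, by omega, by simp [horiz]⟩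
    | cons y t =>
      unfold List.Chain' at h3; rw [List.isChain_cons_cons] at h3
      have hrest : IsMonotoneLatticePath y (c, h) (y :: t) :=
        ⟨rfl, by rw [← getLast?_cons_ne_nil (a, h) (List.cons_ne_nil y t)]; exact h2, h3.2⟩
      rcases h3.1 with hs | hs
      · have hy : y = (a + 1, h) := by
          have := congrArg Prod.fst hs; have := congrArg Prod.snd hs
          simp_all [Prod.ext_iff]; omega
        subst hy
        obtain ⟨k, hk1, hk2⟩ := ih (a + 1) c h hrest
        exact ⟨k + 1, by push_cast; omega, by rw [horiz, hk2]⟩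
      · exfalso
        have hy : y = (a, h + 1) := by
          have := congrArg Prod.fst hs; have := congrArg Prod.snd hs
          simp_all [Prod.ext_iff]; omega
        subst hy
        have := path_y_le _ _ _ hrest
        simp only [Prod.snd] at this
        omega

lemma up_structure : ∀ (p : List (ℤ × ℤ)) (a c h : ℤ),
    IsMonotoneLatticePath (a, h) (c, h + 1) p →
    ∃ m k : ℕ, c = a + m + k ∧ p = cpath a h m k := by
  intro p
  induction p with
  | nil => intro a c h hp; exact absurd hp.1 (by simp)
  | cons x rest ih =>
    intro a c h hp
    obtain ⟨h1, h2, h3⟩ := hp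
    simp only [List.head?_cons, Option.some.injEq] at h1
    subst h1
    cases rest with
    | nil =>
      simp only [List.getLast?_singleton, Option.some.injEq, Prod.ext_iff] at h2
      omega
    | cons y t =>
      unfold List.Chain' at h3; rw [List.isChain_cons_cons] at h3
      have hrest : IsMonotoneLatticePath y (c, h + 1) (y :: t) :=
        ⟨rfl, by rw [← getLast?_cons_ne_nil (a, h) (List.cons_ne_nil y t)]; exact h2, h3.2⟩
      rcases h3.1 with hs | hs
      · have hy : y = (a + 1, h) := by
          have := congrArg Prod.fst hs; have := congrArg Prod.snd hs
          simp_all [Prod.ext_iff]; omega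
        subst hy
        obtain ⟨m, k, hk1, hk2⟩ := ih (a + 1) c h hrest
        exact ⟨m + 1, k, by push_cast; omega, by rw [cpath_succ, hk2]⟩
      · have hy : y = (a, h + 1) := by
          have := congrArg Prod.fst hs; have := congrArg Prod.snd hs
          simp_all [Prod.ext_iff]; omega
        subst hy
        obtain ⟨k, hk1, hk2⟩ := flat_structure _ a c (h + 1) hrest
        exact ⟨0, k, by push_cast; omega, by rw [cpath_zero, hk2]⟩

def F {n : ℕ} (mu lam : Fin n → ℕ) (b : Fin n → ℤ) (i : Fin n) : List (ℤ × ℤ) :=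
  cpath ((mu i : ℤ) - (((i : ℕ) : ℤ) + 1)) (((i : ℕ) : ℤ) + 1)
    (b i - mu i).toNat ((lam i : ℤ) - b i).toNat

/-- For a connected skew shape `λ/μ`, with starting points `uᵢ = (μᵢ − i, i)` and
ending points `vᵢ = (λᵢ − i, i + 1)`, the number of `n`-tuples of pairwise
vertex-disjoint monotone lattice paths `Pᵢ : uᵢ → vᵢ` equals the number `N(λ/μ)` of
minimal lattice paths in `λ/μ` from its southwestern to its northeastern corner,
i.e. the number of sequences `b₁ ≥ … ≥ bₙ` with `μᵢ ≤ bᵢ ≤ λᵢ`. (Indices are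
1-based; here `i : Fin n` stands for the (i+1)-st row.) -/
theorem nonintersecting_paths_count_eq_skew_path_count (n : ℕ) (hn : 1 ≤ n)
    (lam mu : Fin n → ℕ) (hlam : Antitone lam) (hmu : Antitone mu)
    (hsub : ∀ i : Fin n, mu i ≤ lam i)
    (hconn : ∀ i : Fin n, (h : (i : ℕ) + 1 < n) → mu i ≤ lam ⟨(i : ℕ) + 1, h⟩) :
    {P : Fin n → List (ℤ × ℤ) |
        (∀ i : Fin n, IsMonotoneLatticePath
          ((mu i : ℤ) - (((i : ℕ) : ℤ) + 1), ((i : ℕ) : ℤ) + 1)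
          ((lam i : ℤ) - (((i : ℕ) : ℤ) + 1), ((i : ℕ) : ℤ) + 2) (P i)) ∧
        (∀ i j : Fin n, i ≠ j → ∀ x : ℤ × ℤ, x ∈ P i → x ∉ P j)}.ncard =
    {b : Fin n → ℤ | Antitone b ∧ ∀ i : Fin n,
        (mu i : ℤ) ≤ b i ∧ b i ≤ (lam i : ℤ)}.ncard := by
  obtain ⟨N, rfl⟩ : ∃ N, n = N + 1 := ⟨n - 1, by omega⟩
  have key : Set.BijOn (F mu lam)
      {b : Fin (N + 1) → ℤ | Antitone b ∧ ∀ i : Fin (N + 1),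
        (mu i : ℤ) ≤ b i ∧ b i ≤ (lam i : ℤ)}
      {P : Fin (N + 1) → List (ℤ × ℤ) |
        (∀ i : Fin (N + 1), IsMonotoneLatticePath
          ((mu i : ℤ) - (((i : ℕ) : ℤ) + 1), ((i : ℕ) : ℤ) + 1)
          ((lam i : ℤ) - (((i : ℕ) : ℤ) + 1), ((i : ℕ) : ℤ) + 2) (P i)) ∧
        (∀ i j : Fin (N + 1), i ≠ j → ∀ x : ℤ × ℤ, x ∈ P i → x ∉ P j)} := by
    -- helper: disjointness of canonical paths for antitone b
    have key2 : ∀ b : Fin (N + 1) → ℤ,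
        (Antitone b ∧ ∀ i : Fin (N + 1), (mu i : ℤ) ≤ b i ∧ b i ≤ (lam i : ℤ)) →
        ∀ i j : Fin (N + 1), (i : ℕ) < (j : ℕ) →
        ∀ x : ℤ × ℤ, x ∈ F mu lam b i → x ∈ F mu lam b j → False := by
      intro b ⟨hAnti, hBd⟩ i j hlt x hxi hxj
      rw [F, mem_cpath] at hxi hxj
      have hbji : b j ≤ b i := hAnti (by rw [Fin.le_def]; omega)
      have m1 : ((b i - mu i).toNat : ℤ) = b i - mu i :=
        Int.toNat_of_nonneg (by have := (hBd i).1; omega)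
      have k1 : (((lam i : ℤ) - b i).toNat : ℤ) = (lam i : ℤ) - b i :=
        Int.toNat_of_nonneg (by have := (hBd i).2; omega)
      have m2 : ((b j - mu j).toNat : ℤ) = b j - mu j :=
        Int.toNat_of_nonneg (by have := (hBd j).1; omega)
      have k2 : (((lam j : ℤ) - b j).toNat : ℤ) = (lam j : ℤ) - b j :=
        Int.toNat_of_nonneg (by have := (hBd j).2; omega)
      rcases hxi with ⟨hy, ha1, ha2⟩ | ⟨hy, ha1, ha2⟩ <;>
        rcases hxj with ⟨hy', hb1, hb2⟩ | ⟨hy', hb1, hb2⟩ <;>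
        omega
    refine ⟨?_, ?_, ?_⟩
    · -- MapsTo
      rintro b ⟨hAnti, hBd⟩
      refine ⟨?_, ?_⟩
      · intro i
        have h1 : (0 : ℤ) ≤ b i - mu i := by have := (hBd i).1; omega
        have h2 : (0 : ℤ) ≤ (lam i : ℤ) - b i := by have := (hBd i).2; omega
        have hp := cpath_isPath ((mu i : ℤ) - (((i : ℕ) : ℤ) + 1)) (((i : ℕ) : ℤ) + 1)
          (b i - mu i).toNat ((lam i : ℤ) - b i).toNat
        have e : ((mu i : ℤ) - (((i : ℕ) : ℤ) + 1) + ((b i - mu i).toNat : ℤ)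
              + (((lam i : ℤ) - b i).toNat : ℤ), (((i : ℕ) : ℤ) + 1) + 1)
            = ((lam i : ℤ) - (((i : ℕ) : ℤ) + 1), ((i : ℕ) : ℤ) + 2) := by
          rw [Prod.ext_iff]
          refine ⟨?_, by ring⟩
          rw [Int.toNat_of_nonneg h1, Int.toNat_of_nonneg h2]; ring
        rw [e] at hp
        exact hp
      · intro i j hij x hxi hxj
        rcases lt_trichotomy (i : ℕ) (j : ℕ) with hlt | heq | hgt
        · exact key2 b ⟨hAnti, hBd⟩ i j hlt x hxi hxj
        · exact hij (Fin.ext heq)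
        · exact key2 b ⟨hAnti, hBd⟩ j i hgt x hxj hxi
    · -- InjOn
      intro b hb b' hb' hfe
      obtain ⟨hA, hB⟩ := hb
      obtain ⟨hA', hB'⟩ := hb'
      funext i
      have le1 : b i ≤ b' i := by
        have hx : (b i - ((i : ℕ) : ℤ) - 1, ((i : ℕ) : ℤ) + 1) ∈ F mu lam b i := by
          rw [F, mem_cpath]
          left
          have := (hB i).1
          have m1 : ((b i - mu i).toNat : ℤ) = b i - mu i :=
            Int.toNat_of_nonneg (by omega)
          exact ⟨rfl, by omega, by omega⟩
        rw [congrFun hfe i, F, mem_cpath] at hx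
        have m1 : ((b' i - mu i).toNat : ℤ) = b' i - mu i :=
          Int.toNat_of_nonneg (by have := (hB' i).1; omega)
        rcases hx with ⟨_, h1, h2⟩ | ⟨hy, _, _⟩
        · omega
        · exact absurd hy (by simp)
      have le2 : b' i ≤ b i := by
        have hx : (b' i - ((i : ℕ) : ℤ) - 1, ((i : ℕ) : ℤ) + 1) ∈ F mu lam b' i := by
          rw [F, mem_cpath]
          left
          have := (hB' i).1
          have m1 : ((b' i - mu i).toNat : ℤ) = b' i - mu i :=
            Int.toNat_of_nonneg (by omega)
          exact ⟨rfl, by omega, by omega⟩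
        rw [← congrFun hfe i, F, mem_cpath] at hx
        have m1 : ((b i - mu i).toNat : ℤ) = b i - mu i :=
          Int.toNat_of_nonneg (by have := (hB i).1; omega)
        rcases hx with ⟨_, h1, h2⟩ | ⟨hy, _, _⟩
        · omega
        · exact absurd hy (by simp)
      omega
    · -- SurjOn
      rintro P ⟨hpath, hdisj⟩
      choose m k hc hpeq using fun i : Fin (N + 1) =>
        up_structure (P i) ((mu i : ℤ) - (((i : ℕ) : ℤ) + 1))
          ((lam i : ℤ) - (((i : ℕ) : ℤ) + 1)) (((i : ℕ) : ℤ) + 1)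
          (by
            have := hpath i
            rwa [show ((i : ℕ) : ℤ) + 2 = (((i : ℕ) : ℤ) + 1) + 1 from by ring] at this)
      refine ⟨fun i => (mu i : ℤ) + m i, ⟨?_, ?_⟩, ?_⟩
      · -- Antitone
        rw [Fin.antitone_iff_succ_le]
        intro i
        by_contra hcon
        push_neg at hcon
        have hcon' : (mu (i.castSucc) : ℤ) + m (i.castSucc) < (mu (i.succ) : ℤ) + m (i.succ) := hcon
        set I := i.castSucc with hI
        set J := i.succ with hJ
        have hIv : (I : ℕ) = (i : ℕ) := rfl
        have hJv : (J : ℕ) = (i : ℕ) + 1 := rfl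
        have hlamJI : lam J ≤ lam I := hlam (by rw [Fin.le_def]; omega)
        have hxJ : ((mu J : ℤ) + m J - ((J : ℕ) : ℤ) - 1, ((J : ℕ) : ℤ) + 1) ∈ P J := by
          rw [hpeq J, mem_cpath]
          left
          exact ⟨rfl, by omega, by omega⟩
        have hxI : ((mu J : ℤ) + m J - ((J : ℕ) : ℤ) - 1, ((J : ℕ) : ℤ) + 1) ∈ P I := by
          rw [hpeq I, mem_cpath]
          right
          have hcI := hc I
          have hcJ := hc J
          refine ⟨by push_cast; omega, by push_cast at hcon' ⊢; omega, ?_⟩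
          push_cast at hcI hcJ hcon' ⊢
          omega
        exact hdisj I J (by rw [Fin.ne_iff_vne]; omega) _ hxI hxJ
      · intro i
        have hci := hc i
        push_cast at hci
        refine ⟨by simp, ?_⟩
        show (mu i : ℤ) + m i ≤ (lam i : ℤ)
        omega
      · funext i
        rw [hpeq i, F]
        have e1 : ((mu i : ℤ) + m i - mu i).toNat = m i := by omega
        have e2 : ((lam i : ℤ) - ((mu i : ℤ) + m i)).toNat = k i := by
          have := hc i; push_cast at this ⊢; omega
        rw [e1, e2]
  rw [← key.image_eq, Set.ncard_image_of_injOn key.injOn]
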